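/- For all real numbers x and w with 0 ≤ x ≤ 1 and 0 ≤ w ≤ 1, one has (1 − h(w))·w + h(w)·(1 − w) ≤ (8/5)·((1 − x)·w + x·(1 − w)). -/
import Mathlib

/-- The rounding function `h` of QuickCluster. -/
noncomputable def h (w : ℝ) : ℝ :=
  if w ≤ 7/20 then 0 else if w ≤ 63/100 then 25/7 * w - 5/4 else 1

/-- For all `x, w ∈ [0,1]`,
`(1 − h(w))·w + h(w)·(1 − w) ≤ (8/5)·((1 − x)·w + x·(1 − w))`. -/
theorem delta_h_le_zero (x w : ℝ) (hx0 : 0 ≤ x) (hx1 : x ≤ 1)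
    (hw0 : 0 ≤ w) (hw1 : w ≤ 1) :
    (1 - h w) * w + h w * (1 - w) ≤ (8/5) * ((1 - x) * w + x * (1 - w)) := by
  unfold h
  split_ifs with h1 h2 <;>
  nlinarith [mul_nonneg hx0 hw0, mul_nonneg (sub_nonneg.2 hx1) hw0,
    mul_nonneg hx0 (sub_nonneg.2 hw1), mul_nonneg (sub_nonneg.2 hx1) (sub_nonneg.2 hw1),
    sq_nonneg (w - 1/2), sq_nonneg x, sq_nonneg (x - 1/2)]
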